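/- Let ξ_R^{(1)},…,ξ_R^{(N−1)} be complex numbers and define the function ψ_R of the variables T_{k,i} by ψ_R = exp{ Σ_{i=1}^{N−1} ξ_R^{(i)} Σ_{k=i}^{N−1} e^{T_{k,i} − T_{k+1,i+1}} } (with the convention T_{N,j} := 0). Then ψ_R is a Whittaker vector: for every i = 1,…,N−1 one has the pointwise identity E_{i,i+1} ψ_R = ξ_R^{(i)} · ψ_R, where E_{i,i+1} is the Gauss–Givental raising operator. -/

import Mathlib

noncomputable section

/-- Value of the variable `T_{k,i}` (1-based indices), with the convention that
`T_{k,i} = 0` whenever `(k,i)` does not satisfy `1 ≤ i ≤ k ≤ N-1`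
(in particular `T_{N,i} = 0`). -/
def tv (N : ℕ) (T : (Fin N × Fin N) → ℝ) (k i : ℕ) : ℝ :=
  if h : 1 ≤ i ∧ i ≤ k ∧ k ≤ N - 1 then T (⟨k - 1, by omega⟩, ⟨i - 1, by omega⟩) else 0

/-- Partial derivative `∂f/∂T_{k,i}` (1-based indices), with the convention that it is
zero whenever `(k,i)` does not satisfy `1 ≤ i ≤ k ≤ N-1`. -/
def pd (N : ℕ) (f : ((Fin N × Fin N) → ℝ) → ℂ) (k i : ℕ) (T : (Fin N × Fin N) → ℝ) : ℂ :=
  if h : 1 ≤ i ∧ i ≤ k ∧ k ≤ N - 1 then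
    fderiv ℝ f T (Pi.single ((⟨k - 1, by omega⟩ : Fin N), (⟨i - 1, by omega⟩ : Fin N)) 1)
  else 0

/-- The Gauss–Givental Cartan operator `E_{i,i}`. -/
def Ed (N : ℕ) (μ : ℕ → ℂ) (i : ℕ) (f : ((Fin N × Fin N) → ℝ) → ℂ)
    (T : (Fin N × Fin N) → ℝ) : ℂ :=
  μ i * f T + ∑ k ∈ Finset.Icc 1 (i - 1), pd N f (N + k - i) k T
    - ∑ k ∈ Finset.Icc i (N - 1), pd N f k i T

/-- The Gauss–Givental raising operator `E_{i,i+1}`. -/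
def Er (N : ℕ) (i : ℕ) (f : ((Fin N × Fin N) → ℝ) → ℂ) (T : (Fin N × Fin N) → ℝ) : ℂ :=
  ∑ n ∈ Finset.Icc 1 i,
    (∑ k ∈ Finset.Icc n i, (Real.exp (tv N T (N + k - i) k - tv N T (N + k - i - 1) k) : ℂ)) *
      (pd N f (N + n - i - 1) n T - pd N f (N + n - i - 1) (n - 1) T)

/-- The Gauss–Givental lowering operator `E_{i+1,i}`. -/
def El (N : ℕ) (μ : ℕ → ℂ) (i : ℕ) (f : ((Fin N × Fin N) → ℝ) → ℂ)
    (T : (Fin N × Fin N) → ℝ) : ℂ :=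
  ∑ k ∈ Finset.Icc i (N - 1),
    (Real.exp (tv N T k i - tv N T (k + 1) (i + 1)) : ℂ) *
      ((μ i - μ (i + 1)) * f T + ∑ s ∈ Finset.Icc i k, (pd N f s (i + 1) T - pd N f s i T))

/-- The right Whittaker vector
`ψ_R = exp( Σ_{i=1}^{N−1} ξ_R^{(i)} Σ_{k=i}^{N−1} e^{T_{k,i} − T_{k+1,i+1}} )`. -/
def psiR (N : ℕ) (ξ : ℕ → ℂ) (T : (Fin N × Fin N) → ℝ) : ℂ :=
  Complex.exp (∑ i ∈ Finset.Icc 1 (N - 1), ξ i *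
    ∑ k ∈ Finset.Icc i (N - 1), (Real.exp (tv N T k i - tv N T (k + 1) (i + 1)) : ℂ))


/-! ### Auxiliary machinery -/

/-- The linear functional which is the derivative of `fun T => tv N T k i`. -/
def tvL (N : ℕ) (k i : ℕ) : ((Fin N × Fin N) → ℝ) →L[ℝ] ℝ :=
  if h : 1 ≤ i ∧ i ≤ k ∧ k ≤ N - 1 then
    ContinuousLinearMap.proj (⟨k - 1, by omega⟩, ⟨i - 1, by omega⟩)
  else 0

lemma hasFDerivAt_tv (N k i : ℕ) (T : (Fin N × Fin N) → ℝ) :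
    HasFDerivAt (fun T => tv N T k i) (tvL N k i) T := by
  by_cases h : 1 ≤ i ∧ i ≤ k ∧ k ≤ N - 1
  · simp only [tv, tvL, dif_pos h]
    exact (ContinuousLinearMap.proj (R := ℝ) (φ := fun _ : Fin N × Fin N => ℝ) _).hasFDerivAt
  · simp only [tv, tvL, dif_neg h]
    exact hasFDerivAt_const 0 T

lemma tvL_single (N k i a b : ℕ) (hi1 : 1 ≤ i) (hik : i ≤ k) (ha1 : 1 ≤ a) (hb1 : 1 ≤ b)
    (haN : a ≤ N - 1) (h1 : a - 1 < N) (h2 : b - 1 < N) :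
    tvL N k i (Pi.single ((⟨a - 1, h1⟩ : Fin N), (⟨b - 1, h2⟩ : Fin N)) 1)
      = if k = a ∧ i = b then 1 else 0 := by
  unfold tvL
  by_cases hkN : k ≤ N - 1
  · rw [dif_pos ⟨hi1, hik, hkN⟩, ContinuousLinearMap.proj_apply, Pi.single_apply]
    refine if_congr ?_ rfl rfl
    simp only [Prod.mk.injEq, Fin.mk.injEq]
    omega
  · rw [dif_neg (by omega), if_neg (by omega), ContinuousLinearMap.zero_apply]

/-- Explicit formula for the partial derivatives of `psiR`. -/
lemma pd_psiR (N : ℕ) (ξ : ℕ → ℂ) (a b : ℕ) (hb : 1 ≤ b) (hba : b ≤ a) (ha : a ≤ N - 1)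
    (T : (Fin N × Fin N) → ℝ) :
    pd N (psiR N ξ) a b T = psiR N ξ T *
      (ξ b * (Real.exp (tv N T a b - tv N T (a + 1) (b + 1)) : ℂ) -
        if 2 ≤ b then ξ (b - 1) * (Real.exp (tv N T (a - 1) (b - 1) - tv N T a b) : ℂ) else 0) := by
  have hN : 2 ≤ N := by omega
  set L : ((Fin N × Fin N) → ℝ) →L[ℝ] ℂ :=
    ∑ j ∈ Finset.Icc 1 (N - 1), ξ j • ∑ k ∈ Finset.Icc j (N - 1),
      Complex.ofRealCLM.comp
        (Real.exp (tv N T k j - tv N T (k + 1) (j + 1)) • (tvL N k j - tvL N (k + 1) (j + 1)))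
    with hL
  have hS : HasFDerivAt (fun T => ∑ j ∈ Finset.Icc 1 (N - 1), ξ j *
      ∑ k ∈ Finset.Icc j (N - 1),
        (Real.exp (tv N T k j - tv N T (k + 1) (j + 1)) : ℂ)) L T := by
    rw [hL]
    apply HasFDerivAt.fun_sum
    intro j hj
    have hinner : HasFDerivAt (fun T => ∑ k ∈ Finset.Icc j (N - 1),
        (Real.exp (tv N T k j - tv N T (k + 1) (j + 1)) : ℂ))
        (∑ k ∈ Finset.Icc j (N - 1), Complex.ofRealCLM.comp
          (Real.exp (tv N T k j - tv N T (k + 1) (j + 1)) •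
            (tvL N k j - tvL N (k + 1) (j + 1)))) T := by
      apply HasFDerivAt.fun_sum
      intro k hk
      exact Complex.ofRealCLM.hasFDerivAt.comp T
        (((hasFDerivAt_tv N k j T).sub (hasFDerivAt_tv N (k + 1) (j + 1) T)).exp)
    exact hinner.const_mul (ξ j)
  have hpsi : HasFDerivAt (psiR N ξ) (psiR N ξ T • L) T := hS.cexp
  unfold pd
  rw [dif_pos ⟨hb, hba, ha⟩, hpsi.fderiv, ContinuousLinearMap.smul_apply, smul_eq_mul]
  congr 1
  have key : L (Pi.single ((⟨a - 1, by omega⟩ : Fin N), (⟨b - 1, by omega⟩ : Fin N)) 1) =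
      ∑ j ∈ Finset.Icc 1 (N - 1), ∑ k ∈ Finset.Icc j (N - 1),
        ((if k = a ∧ j = b then
            ξ j * (Real.exp (tv N T k j - tv N T (k + 1) (j + 1)) : ℂ) else 0)
         - (if k + 1 = a ∧ j + 1 = b then
            ξ j * (Real.exp (tv N T k j - tv N T (k + 1) (j + 1)) : ℂ) else 0)) := by
    rw [hL, ContinuousLinearMap.sum_apply]
    refine Finset.sum_congr rfl (fun j hj => ?_)
    rw [ContinuousLinearMap.smul_apply, ContinuousLinearMap.sum_apply, Finset.smul_sum]
    refine Finset.sum_congr rfl (fun k hk => ?_)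
    simp only [Finset.mem_Icc] at hj hk
    rw [ContinuousLinearMap.coe_comp', Function.comp_apply, ContinuousLinearMap.smul_apply,
      ContinuousLinearMap.sub_apply,
      tvL_single N k j a b (by omega) (by omega) (by omega) hb ha (by omega) (by omega),
      tvL_single N (k + 1) (j + 1) a b (by omega) (by omega) (by omega) hb ha (by omega)
        (by omega)]
    by_cases h1 : k = a ∧ j = b <;> by_cases h2 : k + 1 = a ∧ j + 1 = b
    · omega
    · rw [if_pos h1, if_pos h1, if_neg h2, if_neg h2]
      simp [Complex.ofRealCLM_apply, smul_eq_mul]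
    · rw [if_neg h1, if_neg h1, if_pos h2, if_pos h2]
      simp [Complex.ofRealCLM_apply, smul_eq_mul]
    · rw [if_neg h1, if_neg h1, if_neg h2, if_neg h2]
      simp [Complex.ofRealCLM_apply, smul_eq_mul]
  rw [key]
  simp only [Finset.sum_sub_distrib]
  congr 1
  · have hP : ∑ j ∈ Finset.Icc 1 (N - 1), ∑ k ∈ Finset.Icc j (N - 1),
        (if k = a ∧ j = b then
          ξ j * (Real.exp (tv N T k j - tv N T (k + 1) (j + 1)) : ℂ) else 0)
        = ξ b * (Real.exp (tv N T a b - tv N T (a + 1) (b + 1)) : ℂ) := by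
      rw [Finset.sum_eq_single_of_mem b (by simp only [Finset.mem_Icc]; omega)]
      · have : ∀ k ∈ Finset.Icc b (N - 1),
            (if k = a ∧ b = b then
              ξ b * (Real.exp (tv N T k b - tv N T (k + 1) (b + 1)) : ℂ) else 0)
            = (if k = a then
              ξ b * (Real.exp (tv N T k b - tv N T (k + 1) (b + 1)) : ℂ) else 0) := by
          intro k hk
          exact if_congr (by tauto) rfl rfl
        rw [Finset.sum_congr rfl this, Finset.sum_ite_eq' (Finset.Icc b (N - 1)) a,
          if_pos (by simp only [Finset.mem_Icc]; omega)]
      · intro j hj hne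
        refine Finset.sum_eq_zero (fun k hk => if_neg (fun h => hne h.2))
    exact hP
  · by_cases hb2 : 2 ≤ b
    · rw [if_pos hb2]
      rw [Finset.sum_eq_single_of_mem (b - 1) (by simp only [Finset.mem_Icc]; omega)]
      · have : ∀ k ∈ Finset.Icc (b - 1) (N - 1),
            (if k + 1 = a ∧ b - 1 + 1 = b then
              ξ (b - 1) * (Real.exp (tv N T k (b - 1) - tv N T (k + 1) (b - 1 + 1)) : ℂ) else 0)
            = (if k = a - 1 then
              ξ (b - 1) * (Real.exp (tv N T k (b - 1) - tv N T (k + 1) (b - 1 + 1)) : ℂ) else 0) := by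
          intro k hk
          exact if_congr (by omega) rfl rfl
        rw [Finset.sum_congr rfl this, Finset.sum_ite_eq' (Finset.Icc (b - 1) (N - 1)) (a - 1),
          if_pos (by simp only [Finset.mem_Icc]; omega)]
        have e1 : a - 1 + 1 = a := by omega
        have e2 : b - 1 + 1 = b := by omega
        rw [e1, e2]
      · intro j hj hne
        simp only [Finset.mem_Icc] at hj
        refine Finset.sum_eq_zero (fun k hk => if_neg (fun h => hne (by omega)))
    · rw [if_neg hb2]
      refine Finset.sum_eq_zero (fun j hj => Finset.sum_eq_zero (fun k hk => if_neg ?_))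
      simp only [Finset.mem_Icc] at hj
      omega

lemma tele_sum (g : ℕ → ℂ) (hg0 : g 0 = 0) (k : ℕ) :
    ∑ n ∈ Finset.Icc 1 k, (g n - g (n - 1)) = g k := by
  induction k with
  | zero => rw [Finset.Icc_eq_empty (by omega), Finset.sum_empty, hg0]
  | succ k ih =>
    rw [Finset.sum_Icc_succ_top (by omega), ih]
    simp only [Nat.add_sub_cancel]
    ring
/-- `ψ_R` is a Whittaker vector for the Gauss–Givental raising operators:
`E_{i,i+1} ψ_R = ξ_R^{(i)} ψ_R` for `i = 1, …, N−1`. -/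
theorem whittaker_vector_right (N : ℕ) (hN : 2 ≤ N) (ξ : ℕ → ℂ)
    (i : ℕ) (hi1 : 1 ≤ i) (hi2 : i ≤ N - 1) (T : (Fin N × Fin N) → ℝ) :
    Er N i (psiR N ξ) T = ξ i * psiR N ξ T := by
  have hNi : i + 1 ≤ N := by omega
  set u : ℕ → ℂ := fun n => if 1 ≤ n then
      ξ n * (Real.exp (tv N T (N + n - i - 1) n - tv N T (N + n - i) (n + 1)) : ℂ) else 0 with hu
  set v : ℕ → ℂ := fun n => if 2 ≤ n then
      ξ (n - 1) * (Real.exp (tv N T (N + n - i - 1) (n - 1) - tv N T (N + n - i) n) : ℂ)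
    else 0 with hv
  set g : ℕ → ℂ := fun n => psiR N ξ T * (u n - v n) with hg
  have hterm : ∀ n ∈ Finset.Icc 1 i,
      pd N (psiR N ξ) (N + n - i - 1) n T - pd N (psiR N ξ) (N + n - i - 1) (n - 1) T
        = g n - g (n - 1) := by
    intro n hn
    simp only [Finset.mem_Icc] at hn
    obtain ⟨n', rfl⟩ : ∃ n', n = n' + 1 := ⟨n - 1, by omega⟩
    rw [pd_psiR N ξ (N + (n' + 1) - i - 1) (n' + 1) (by omega) (by omega) (by omega) T]
    have e1 : N + (n' + 1) - i - 1 + 1 = N + (n' + 1) - i := by omega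
    rw [e1]
    rcases Nat.eq_zero_or_pos n' with rfl | hn'
    · -- n = 1
      have h0 : pd N (psiR N ξ) (N + (0 + 1) - i - 1) (0 + 1 - 1) T = 0 := by
        unfold pd
        rw [dif_neg (by omega)]
      rw [h0]
      simp only [hg, hu, hv]
      norm_num
    · -- n = n' + 1, n' ≥ 1
      have e2 : n' + 1 - 1 = n' := by omega
      rw [e2, pd_psiR N ξ (N + (n' + 1) - i - 1) n' (by omega) (by omega) (by omega) T]
      have e6 : N + (n' + 1) - i = N + n' - i + 1 := by omega
      have e7 : N + n' - i + 1 - 1 = N + n' - i := by omega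
      have c1 : (1:ℕ) ≤ n' + 1 := by omega
      have c2 : (2:ℕ) ≤ n' + 1 := by omega
      have c3 : (1:ℕ) ≤ n' := by omega
      simp only [hg, hu, hv, e2, e6, e7, if_pos c1, if_pos c2, if_pos c3]
      ring
  have step1 : Er N i (psiR N ξ) T = ∑ n ∈ Finset.Icc 1 i,
      (∑ k ∈ Finset.Icc n i,
        (Real.exp (tv N T (N + k - i) k - tv N T (N + k - i - 1) k) : ℂ)) *
        (g n - g (n - 1)) := by
    unfold Er
    exact Finset.sum_congr rfl (fun n hn => by rw [hterm n hn])
  rw [step1]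
  have step2 : ∑ n ∈ Finset.Icc 1 i,
      (∑ k ∈ Finset.Icc n i,
        (Real.exp (tv N T (N + k - i) k - tv N T (N + k - i - 1) k) : ℂ)) * (g n - g (n - 1))
      = ∑ k ∈ Finset.Icc 1 i,
        (Real.exp (tv N T (N + k - i) k - tv N T (N + k - i - 1) k) : ℂ) *
          ∑ n ∈ Finset.Icc 1 k, (g n - g (n - 1)) := by
    simp only [Finset.sum_mul]
    rw [Finset.sum_comm' (s := Finset.Icc 1 i) (t := fun n => Finset.Icc n i)
      (t' := Finset.Icc 1 i) (s' := fun k => Finset.Icc 1 k)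
      (fun n k => by simp only [Finset.mem_Icc]; omega)]
    exact Finset.sum_congr rfl (fun k hk => by rw [Finset.mul_sum])
  rw [step2]
  have hg0 : g 0 = 0 := by simp [hg, hu, hv]
  have step3 : ∀ k, ∑ n ∈ Finset.Icc 1 k, (g n - g (n - 1)) = g k :=
    tele_sum g hg0
  set w : ℕ → ℂ := fun n => if 1 ≤ n then
      psiR N ξ T * ξ n *
        (Real.exp (tv N T (N + n - i) n - tv N T (N + n - i) (n + 1)) : ℂ) else 0 with hw
  have step4 : ∀ k ∈ Finset.Icc 1 i,
      (Real.exp (tv N T (N + k - i) k - tv N T (N + k - i - 1) k) : ℂ) * g k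
        = w k - w (k - 1) := by
    intro k hk
    simp only [Finset.mem_Icc] at hk
    obtain ⟨k', rfl⟩ : ∃ k', k = k' + 1 := ⟨k - 1, by omega⟩
    have e4 : N + (k' + 1) - i - 1 = N + k' - i := by omega
    have m1 : (Real.exp (tv N T (N + (k' + 1) - i) (k' + 1) - tv N T (N + k' - i) (k' + 1)) : ℂ)
        * (Real.exp (tv N T (N + k' - i) (k' + 1) - tv N T (N + (k' + 1) - i) (k' + 1 + 1)) : ℂ)
        = (Real.exp (tv N T (N + (k' + 1) - i) (k' + 1)
            - tv N T (N + (k' + 1) - i) (k' + 1 + 1)) : ℂ) := by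
      rw [← Complex.ofReal_mul, ← Real.exp_add]
      congr 2
      ring
    have m2 : (Real.exp (tv N T (N + (k' + 1) - i) (k' + 1) - tv N T (N + k' - i) (k' + 1)) : ℂ)
        * (Real.exp (tv N T (N + k' - i) k' - tv N T (N + (k' + 1) - i) (k' + 1)) : ℂ)
        = (Real.exp (tv N T (N + k' - i) k' - tv N T (N + k' - i) (k' + 1)) : ℂ) := by
      rw [← Complex.ofReal_mul, ← Real.exp_add]
      congr 2
      ring
    simp only [hg, hu, hv, hw, e4, Nat.add_sub_cancel]
    rw [if_pos (show (1:ℕ) ≤ k' + 1 by omega), if_pos (show (1:ℕ) ≤ k' + 1 by omega)]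
    by_cases hk0 : 1 ≤ k'
    · rw [if_pos (show (2:ℕ) ≤ k' + 1 by omega), if_pos hk0, ← m1, ← m2]
      ring
    · rw [if_neg (show ¬ (2:ℕ) ≤ k' + 1 by omega), if_neg hk0, ← m1]
      ring
  calc ∑ k ∈ Finset.Icc 1 i,
        (Real.exp (tv N T (N + k - i) k - tv N T (N + k - i - 1) k) : ℂ) *
          ∑ n ∈ Finset.Icc 1 k, (g n - g (n - 1))
      = ∑ k ∈ Finset.Icc 1 i, (w k - w (k - 1)) := by
        refine Finset.sum_congr rfl (fun k hk => ?_)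
        rw [step3 k, step4 k hk]
    _ = w i := tele_sum w (by simp [hw]) i
    _ = ξ i * psiR N ξ T := by
        have eN : N + i - i = N := by omega
        have h0 : tv N T N i = 0 := by unfold tv; rw [dif_neg (by omega)]
        have h0' : tv N T N (i + 1) = 0 := by unfold tv; rw [dif_neg (by omega)]
        rw [hw]
        simp only [hi1, if_pos, eN, h0, h0']
        norm_num
        ring
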